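/- Let G be a connected simple graph on Fin k (k ≥ 2) with maximum degree Δ ≥ 1, and let P : Fin k → ℝ be a probability vector with P i > 0 for all i and ∑ i, P i = 1. Define the k×k real symmetric matrix B_G(P) by B_G(P)_ii = (1/Δ) · ( ∑_{j ∈ N_G(i)} (P j − P i)/(P i + P j) + (deg_G(i) − Δ) ), B_G(P)_ij = −2√(P i · P j)/(Δ (P i + P j)) whenever {i,j} is an edge of G, and B_G(P)_ij = 0 otherwise. Then B_G(P) · v(P) = −v(P) where v(P)_i = √(P i), −1 is the smallest eigenvalue of B_G(P), and every x ∈ ℝ^k with B_G(P) · x = −x is a scalar multiple of v(P). -/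

import Mathlib

open Matrix Finset

/-- Let `G` be a connected simple graph on `Fin k` (`k ≥ 2`)
with maximum degree `Δ ≥ 1` and `P` a positive probability vector.  The
degree-corrected warm-started XY-mixer `B_G(P)` with
`B i i = (1/Δ)(∑_{j ∈ N_G(i)} (P j - P i)/(P i + P j) + (deg_G(i) - Δ))`,
`B i j = -2√(P i · P j)/(Δ(P i + P j))` on edges and `0` otherwise, satisfies
`B_G(P)·v(P) = -v(P)` (with `v(P) i = √(P i)`), `-1` is its smallest
eigenvalue, and every `x` with `B_G(P)·x = -x` is a scalar multiple of `v(P)`. -/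
theorem statement7 (k : ℕ) (hk : 2 ≤ k)
    (G : SimpleGraph (Fin k)) [DecidableRel G.Adj]
    (hconn : G.Connected) (hΔ : 1 ≤ G.maxDegree)
    (P : Fin k → ℝ) (hpos : ∀ i, 0 < P i) (hsum : ∑ i, P i = 1)
    (B : Matrix (Fin k) (Fin k) ℝ)
    (hB : ∀ i j, B i j =
      if i = j then
        (1 / (G.maxDegree : ℝ)) *
          ((∑ l ∈ G.neighborFinset i, (P l - P i) / (P i + P l))
            + ((G.degree i : ℝ) - (G.maxDegree : ℝ)))
      else if G.Adj i j then
        -2 * Real.sqrt (P i * P j) / ((G.maxDegree : ℝ) * (P i + P j))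
      else 0)
    (v : Fin k → ℝ) (hv : ∀ i, v i = Real.sqrt (P i)) :
    B.mulVec v = -v ∧
    (∀ μ : ℝ, ∀ x : Fin k → ℝ, x ≠ 0 → B.mulVec x = μ • x → -1 ≤ μ) ∧
    (∀ x : Fin k → ℝ, B.mulVec x = -x → ∃ c : ℝ, x = c • v) := by
  have hΔ0 : (0:ℝ) < (G.maxDegree : ℝ) := by exact_mod_cast hΔ
  set Δ : ℝ := (G.maxDegree : ℝ) with hΔdef
  have hΔne : Δ ≠ 0 := ne_of_gt hΔ0
  have hs : ∀ i j : Fin k, 0 < P i + P j := fun i j => add_pos (hpos i) (hpos j)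
  have hsne : ∀ i j : Fin k, P i + P j ≠ 0 := fun i j => ne_of_gt (hs i j)
  have hsqrt : ∀ i, 0 < Real.sqrt (P i) := fun i => Real.sqrt_pos.mpr (hpos i)
  -- row expansion of mulVec
  have hrow : ∀ (x : Fin k → ℝ) (i : Fin k), B.mulVec x i
      = B i i * x i + ∑ j ∈ G.neighborFinset i, B i j * x j := by
    intro x i
    have hsplit : ∀ j : Fin k, B i j * x j
        = (if j = i then B i i * x i else 0) + (if G.Adj i j then B i j * x j else 0) := by
      intro j
      by_cases h : j = i
      · subst h; simp [SimpleGraph.irrefl]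
      · by_cases h2 : G.Adj i j
        · simp [h, h2]
        · have hz : B i j = 0 := by rw [hB, if_neg (Ne.symm h), if_neg h2]
          simp [h, h2, hz]
    show ∑ j, B i j * x j = _
    rw [Finset.sum_congr rfl (fun j _ => hsplit j), Finset.sum_add_distrib,
      Finset.sum_ite_eq' univ i, if_pos (mem_univ i)]
    congr 1
    rw [SimpleGraph.neighborFinset_eq_filter, Finset.sum_filter]
  -- edge entries
  have hedge : ∀ i j, G.Adj i j →
      B i j = -2 * Real.sqrt (P i) * Real.sqrt (P j) / (Δ * (P i + P j)) := by
    intro i j h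
    rw [hB, if_neg (G.ne_of_adj h), if_pos h, Real.sqrt_mul (hpos i).le]
    ring
  -- diagonal entries
  have hdiag : ∀ i, B i i
      = (1/Δ) * (∑ j ∈ G.neighborFinset i, 2*P j/(P i+P j)) - 1 := by
    intro i
    have h2 : ∑ j ∈ G.neighborFinset i, (P j - P i)/(P i + P j)
        = (∑ j ∈ G.neighborFinset i, 2*P j/(P i+P j)) - (G.degree i : ℝ) := by
      have hone : ∀ j ∈ G.neighborFinset i,
          (P j - P i)/(P i + P j) = 2*P j/(P i+P j) - 1 := by
        intro j _
        rw [eq_sub_iff_add_eq, div_add' _ _ _ (hsne i j), div_eq_div_iff (hsne i j) (hsne i j)]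
        ring
      rw [Finset.sum_congr rfl hone, Finset.sum_sub_distrib, Finset.sum_const,
        nsmul_eq_mul, mul_one, SimpleGraph.card_neighborFinset_eq_degree]
    rw [hB, if_pos rfl, h2]
    field_simp
    ring
  -- Part 1 : B v = -v
  have part1 : B.mulVec v = -v := by
    funext i
    rw [Pi.neg_apply, hrow v i, hdiag i, hv i]
    have e1 : ∑ j ∈ G.neighborFinset i, B i j * v j
        = ∑ j ∈ G.neighborFinset i, (-(1/Δ) * Real.sqrt (P i)) * (2*P j/(P i+P j)) := by
      refine Finset.sum_congr rfl fun j hj => ?_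
      rw [hedge i j ((SimpleGraph.mem_neighborFinset _ _ _).mp hj), hv j]
      have hj2 : Real.sqrt (P j) * Real.sqrt (P j) = P j := Real.mul_self_sqrt (hpos j).le
      rw [← div_div]
      linear_combination (-(2*Real.sqrt (P i))/Δ/(P i+P j)) * hj2
    rw [e1, ← Finset.mul_sum]
    ring
  -- quadratic-form key identity, per row
  have hkey : ∀ (x : Fin k → ℝ) (i : Fin k), x i * B.mulVec x i + x i * x i
      = (1/Δ) * ∑ j ∈ G.neighborFinset i,
          (2*P j*(x i)^2 - 2*Real.sqrt (P i)*Real.sqrt (P j)*(x i*x j))/(P i+P j) := by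
    intro x i
    rw [hrow x i, hdiag i]
    have e1 : ∑ j ∈ G.neighborFinset i, B i j * x j
        = ∑ j ∈ G.neighborFinset i,
            (-2*Real.sqrt (P i)*Real.sqrt (P j)/(Δ*(P i+P j)))*x j :=
      Finset.sum_congr rfl fun j hj => by
        rw [hedge i j ((SimpleGraph.mem_neighborFinset _ _ _).mp hj)]
    rw [e1]
    have expand : ∀ (S : Finset (Fin k)) (c d : Fin k → ℝ),
        x i * ((∑ j ∈ S, c j - 1) * x i + ∑ j ∈ S, d j) + x i * x i
          = ∑ j ∈ S, (x i * c j * x i + x i * d j) := by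
      intro S c d
      rw [Finset.sum_add_distrib, ← Finset.sum_mul, ← Finset.mul_sum, ← Finset.mul_sum]
      ring
    rw [show (1/Δ) * (∑ j ∈ G.neighborFinset i, 2*P j/(P i+P j))
        = ∑ j ∈ G.neighborFinset i, (1/Δ) * (2*P j/(P i+P j)) from Finset.mul_sum _ _ _]
    rw [expand (G.neighborFinset i) (fun j => (1/Δ) * (2*P j/(P i+P j)))
      (fun j => (-2*Real.sqrt (P i)*Real.sqrt (P j)/(Δ*(P i+P j)))*x j)]
    rw [Finset.mul_sum]
    refine Finset.sum_congr rfl fun j _ => ?_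
    field_simp
    ring
  -- symmetry swap over edges
  have hswap : ∀ f : Fin k → Fin k → ℝ,
      ∑ i, ∑ j ∈ G.neighborFinset i, f i j = ∑ i, ∑ j ∈ G.neighborFinset i, f j i := by
    intro f
    have h1 : ∀ (g : Fin k → Fin k → ℝ), ∑ i, ∑ j ∈ G.neighborFinset i, g i j
        = ∑ i, ∑ j, if G.Adj i j then g i j else 0 := by
      intro g
      refine Finset.sum_congr rfl fun i _ => ?_
      rw [SimpleGraph.neighborFinset_eq_filter, Finset.sum_filter]
    rw [h1, h1, Finset.sum_comm]
    refine Finset.sum_congr rfl fun i _ => Finset.sum_congr rfl fun j _ => ?_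
    by_cases h : G.Adj i j
    · rw [if_pos h, if_pos (G.adj_symm h)]
    · rw [if_neg h, if_neg (fun h' => h (G.adj_symm h'))]
  -- global quadratic form
  have hquad : ∀ x : Fin k → ℝ, x ⬝ᵥ B.mulVec x + x ⬝ᵥ x
      = (1/Δ) * ∑ i, ∑ j ∈ G.neighborFinset i,
          (Real.sqrt (P j) * x i - Real.sqrt (P i) * x j)^2 / (P i + P j) := by
    intro x
    have hd : x ⬝ᵥ B.mulVec x + x ⬝ᵥ x = ∑ i, (x i * B.mulVec x i + x i * x i) := by
      rw [Finset.sum_add_distrib]; rfl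
    rw [hd, Finset.sum_congr rfl (fun i _ => hkey x i), ← Finset.mul_sum]
    congr 1
    have hpt : ∀ i j : Fin k,
        (Real.sqrt (P j) * x i - Real.sqrt (P i) * x j)^2 / (P i + P j)
        = (P j * (x i)^2 - Real.sqrt (P i)*Real.sqrt (P j)*(x i * x j)) / (P i + P j)
          + (P i * (x j)^2 - Real.sqrt (P j)*Real.sqrt (P i)*(x j * x i)) / (P j + P i) := by
      intro i j
      rw [add_comm (P j) (P i), ← add_div]
      congr 1
      have h1 := Real.sq_sqrt (hpos i).le
      have h2 := Real.sq_sqrt (hpos j).le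
      ring_nf
      linear_combination (x i^2) * h2 + (x j^2) * h1
    have e2 : ∑ i, ∑ j ∈ G.neighborFinset i,
          (2*P j*(x i)^2 - 2*Real.sqrt (P i)*Real.sqrt (P j)*(x i*x j))/(P i+P j)
        = ∑ i, ∑ j ∈ G.neighborFinset i,
            ((P j * (x i)^2 - Real.sqrt (P i)*Real.sqrt (P j)*(x i * x j)) / (P i + P j)
             + (P i * (x j)^2 - Real.sqrt (P j)*Real.sqrt (P i)*(x j * x i)) / (P j + P i)) := by
      have e3 : ∑ i, ∑ j ∈ G.neighborFinset i,
            (P i * (x j)^2 - Real.sqrt (P j)*Real.sqrt (P i)*(x j * x i)) / (P j + P i)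
          = ∑ i, ∑ j ∈ G.neighborFinset i,
            (P j * (x i)^2 - Real.sqrt (P i)*Real.sqrt (P j)*(x i * x j)) / (P i + P j) :=
        hswap (fun i j => (P i * (x j)^2 - Real.sqrt (P j)*Real.sqrt (P i)*(x j * x i)) / (P j + P i))
      simp only [Finset.sum_add_distrib]
      rw [e3, ← Finset.sum_add_distrib]
      refine Finset.sum_congr rfl fun i _ => ?_
      rw [← Finset.sum_add_distrib]
      refine Finset.sum_congr rfl fun j _ => ?_
      rw [← add_div]
      congr 1
      ring
    rw [e2]
    exact (Finset.sum_congr rfl fun i _ => Finset.sum_congr rfl fun j _ => hpt i j).symm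
  -- Part 2
  have part2 : ∀ μ : ℝ, ∀ x : Fin k → ℝ, x ≠ 0 → B.mulVec x = μ • x → -1 ≤ μ := by
    intro μ x hx hxeq
    have h1 : x ⬝ᵥ B.mulVec x = μ * (x ⬝ᵥ x) := by
      rw [hxeq]
      simp [dotProduct, Finset.mul_sum, mul_left_comm]
    have h2 : 0 < x ⬝ᵥ x := by
      obtain ⟨i0, hi0⟩ := Function.ne_iff.mp hx
      exact Finset.sum_pos' (fun i _ => mul_self_nonneg (x i))
        ⟨i0, mem_univ _, mul_self_pos.mpr hi0⟩
    have h3 : 0 ≤ (1/Δ) * ∑ i, ∑ j ∈ G.neighborFinset i,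
        (Real.sqrt (P j) * x i - Real.sqrt (P i) * x j)^2 / (P i + P j) := by
      apply mul_nonneg (by positivity)
      exact Finset.sum_nonneg fun i _ => Finset.sum_nonneg fun j _ =>
        div_nonneg (sq_nonneg _) (hs i j).le
    have h4 := hquad x
    rw [h1] at h4
    nlinarith
  -- Part 3
  have part3 : ∀ x : Fin k → ℝ, B.mulVec x = -x → ∃ c : ℝ, x = c • v := by
    intro x hxeq
    have h1 : x ⬝ᵥ B.mulVec x = -(x ⬝ᵥ x) := by rw [hxeq, dotProduct_neg]
    have h4 := hquad x
    rw [h1, neg_add_cancel] at h4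
    have hS0 : ∑ i, ∑ j ∈ G.neighborFinset i,
        (Real.sqrt (P j) * x i - Real.sqrt (P i) * x j)^2 / (P i + P j) = 0 := by
      rcases mul_eq_zero.mp h4.symm with h | h
      · exact absurd h (by positivity)
      · exact h
    have hterm : ∀ i : Fin k, ∀ j ∈ G.neighborFinset i,
        (Real.sqrt (P j) * x i - Real.sqrt (P i) * x j)^2 / (P i + P j) = 0 := by
      intro i j hj
      have hinner := (Finset.sum_eq_zero_iff_of_nonneg
        (fun i _ => Finset.sum_nonneg fun j _ =>
          div_nonneg (sq_nonneg _) (hs i j).le)).mp hS0 i (mem_univ i)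
      exact (Finset.sum_eq_zero_iff_of_nonneg
        (fun j _ => div_nonneg (sq_nonneg _) (hs i j).le)).mp hinner j hj
    have hstep : ∀ i j : Fin k, G.Adj i j →
        x i / Real.sqrt (P i) = x j / Real.sqrt (P j) := by
      intro i j hij
      have ht := hterm i j ((SimpleGraph.mem_neighborFinset _ _ _).mpr hij)
      have h0 : Real.sqrt (P j) * x i - Real.sqrt (P i) * x j = 0 := by
        have := (div_eq_zero_iff.mp ht).resolve_right (hsne i j)
        exact pow_eq_zero_iff two_ne_zero |>.mp this
      rw [div_eq_div_iff (ne_of_gt (hsqrt i)) (ne_of_gt (hsqrt j))]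
      linear_combination h0
    have hconst : ∀ (a b : Fin k) (w : G.Walk a b),
        x a / Real.sqrt (P a) = x b / Real.sqrt (P b) := by
      intro a b w
      induction w with
      | nil => rfl
      | cons h p ih => exact (hstep _ _ h).trans ih
    have i0 : Fin k := ⟨0, by omega⟩
    refine ⟨x i0 / Real.sqrt (P i0), funext fun j => ?_⟩
    obtain ⟨w⟩ := hconn.preconnected i0 j
    have := hconst i0 j w
    rw [Pi.smul_apply, smul_eq_mul, hv j, this, div_mul_cancel₀ _ (ne_of_gt (hsqrt j))]
  exact ⟨part1, part2, part3⟩
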